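/- Let B be a positive definite symmetric real g×g matrix. Then the tropical theta function Θ(·; B) is piecewise linear in the following sense: for every bounded subset K ⊂ ℝ^g there exists a finite set F ⊂ ℤ^g such that Θ(z; B) = min_{m ∈ F} [ (1/2)⟨m, B m⟩ + ⟨m, z⟩ ] for every z ∈ K. -/

import Mathlib

open scoped BigOperators

lemma quad_homog (g : ℕ) (B : Matrix (Fin g) (Fin g) ℝ) (a : ℝ) (x : Fin g → ℝ) :
    ∑ i, (a • x) i * ∑ j, B i j * (a • x) j = a ^ 2 * ∑ i, x i * ∑ j, B i j * x j := by
  rw [Finset.mul_sum]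
  refine Finset.sum_congr rfl fun i _ => ?_
  simp only [Pi.smul_apply, smul_eq_mul, Finset.mul_sum]
  exact Finset.sum_congr rfl fun j _ => by ring

lemma quad_lb (g : ℕ) (B : Matrix (Fin g) (Fin g) ℝ) (hB : B.PosDef) :
    ∃ c > 0, ∀ x : Fin g → ℝ, c * ‖x‖ ^ 2 ≤ ∑ i, x i * ∑ j, B i j * x j := by
  have hpos : ∀ x : Fin g → ℝ, x ≠ 0 → 0 < ∑ i, x i * ∑ j, B i j * x j := fun x hx => by
    simpa [dotProduct, Matrix.mulVec, Finset.mul_sum] using hB.dotProduct_mulVec_pos hx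
  rcases Nat.eq_zero_or_pos g with hg | hg
  · subst hg
    refine ⟨1, one_pos, fun x => ?_⟩
    have hx0 : ‖x‖ = 0 := by rw [Subsingleton.elim x 0, norm_zero]
    simp [hx0]
  haveI : Nonempty (Fin g) := ⟨⟨0, hg⟩⟩
  set Q : (Fin g → ℝ) → ℝ := fun x => ∑ i, x i * ∑ j, B i j * x j with hQ
  have hQcont : Continuous Q := by
    apply continuous_finset_sum
    intro i _
    exact (continuous_apply i).mul (continuous_finset_sum _ fun j _ =>
      continuous_const.mul (continuous_apply j))
  have hsph : (Metric.sphere (0 : Fin g → ℝ) 1).Nonempty :=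
    NormedSpace.sphere_nonempty.mpr zero_le_one
  obtain ⟨u, hu, hmin⟩ := (isCompact_sphere (0 : Fin g → ℝ) 1).exists_isMinOn hsph
    hQcont.continuousOn
  have hun : ‖u‖ = 1 := by simpa using hu
  have hu0 : u ≠ 0 := fun h => by simp [h] at hun
  refine ⟨Q u, hpos u hu0, fun x => ?_⟩
  rcases eq_or_ne x 0 with rfl | hx
  · simp [hQ]
  have ht : (0:ℝ) < ‖x‖ := norm_pos_iff.mpr hx
  set u' := ‖x‖⁻¹ • x with hu'
  have hu'mem : u' ∈ Metric.sphere (0 : Fin g → ℝ) 1 := by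
    simp [hu', norm_smul, abs_of_pos (inv_pos.mpr ht), inv_mul_cancel₀ ht.ne']
  have hxu : x = ‖x‖ • u' := by
    rw [hu', smul_smul, mul_inv_cancel₀ ht.ne', one_smul]
  have hQx : Q x = ‖x‖ ^ 2 * Q u' := by
    conv_lhs => rw [hxu]
    exact quad_homog g B ‖x‖ u'
  have hle : Q u ≤ Q u' := hmin hu'mem
  calc Q u * ‖x‖ ^ 2 ≤ Q u' * ‖x‖ ^ 2 := by nlinarith [sq_nonneg ‖x‖]
    _ = Q x := by rw [hQx]; ring

/-- The tropical theta function `Θ(z; B) = min_{m ∈ ℤ^g} [(1/2)⟨m, B m⟩ + ⟨m, z⟩]`,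
defined as an infimum. -/
noncomputable def tropTheta (g : ℕ) (B : Matrix (Fin g) (Fin g) ℝ) (z : Fin g → ℝ) : ℝ :=
  sInf {x : ℝ | ∃ m : Fin g → ℤ,
    x = (1/2) * ∑ i, (m i : ℝ) * (∑ j, B i j * (m j : ℝ)) + ∑ i, (m i : ℝ) * z i}

/-- `Θ(·; B)` is piecewise linear: on every bounded subset `K ⊂ ℝ^g`
it coincides with a minimum over a finite set `F ⊂ ℤ^g` of the affine functions
`z ↦ (1/2)⟨m, B m⟩ + ⟨m, z⟩`. -/
theorem stmt4 (g : ℕ) (B : Matrix (Fin g) (Fin g) ℝ) (hB : B.PosDef)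
    (K : Set (Fin g → ℝ)) (hK : Bornology.IsBounded K) :
    ∃ F : Finset (Fin g → ℤ), ∃ hF : F.Nonempty, ∀ z ∈ K,
      tropTheta g B z = F.inf' hF (fun m =>
        (1/2) * ∑ i, (m i : ℝ) * (∑ j, B i j * (m j : ℝ)) + ∑ i, (m i : ℝ) * z i) := by
  obtain ⟨c, hc, hQ⟩ := quad_lb g B hB
  obtain ⟨R0, hR0⟩ := isBounded_iff_forall_norm_le.mp hK
  set R : ℝ := max R0 0 with hRdef
  have hR : ∀ z ∈ K, ‖z‖ ≤ R := fun z hz => (hR0 z hz).trans (le_max_left _ _)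
  have hRnn : (0:ℝ) ≤ R := le_max_right _ _
  set N : ℕ := ⌈2 * g * R / c⌉₊ with hNdef
  have hN : 2 * g * R / c ≤ N := Nat.le_ceil _
  set F : Finset (Fin g → ℤ) := Finset.Icc (fun _ => -(N:ℤ)) (fun _ => (N:ℤ)) with hFdef
  have h0F : (0 : Fin g → ℤ) ∈ F := by
    rw [hFdef, Finset.mem_Icc]
    constructor <;> intro i <;> simp
  have hF : F.Nonempty := ⟨0, h0F⟩
  refine ⟨F, hF, fun z hz => ?_⟩
  set f : (Fin g → ℤ) → ℝ := fun m =>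
    (1/2) * ∑ i, (m i : ℝ) * (∑ j, B i j * (m j : ℝ)) + ∑ i, (m i : ℝ) * z i with hfdef
  have hf0 : f 0 = 0 := by simp [hfdef]
  have hout : ∀ m : Fin g → ℤ, m ∉ F → 0 ≤ f m := by
    intro m hm
    set mr : Fin g → ℝ := fun i => (m i : ℝ) with hmr
    set t : ℝ := ‖mr‖ with htdef
    have hco : ∀ i, |mr i| ≤ t := fun i => by
      simpa [Real.norm_eq_abs] using norm_le_pi_norm mr i
    have hbig : (N:ℝ) + 1 ≤ t := by
      have : ∃ i, (N:ℤ) < |m i| := by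
        by_contra h
        push_neg at h
        exact hm (Finset.mem_Icc.mpr
          ⟨fun i => neg_le_of_abs_le (h i), fun i => (abs_le.mp (h i)).2⟩)
      obtain ⟨i, hi⟩ := this
      have h1 : (N:ℤ) + 1 ≤ |m i| := hi
      have h2 : (N:ℝ) + 1 ≤ |mr i| := by
        simp only [hmr]
        exact_mod_cast h1
      exact h2.trans (hco i)
    have ht0 : (0:ℝ) ≤ t := le_trans (by positivity) hbig
    have ht1 : (1:ℝ) ≤ t := le_trans (by simp [Nat.cast_nonneg]) hbig
    have h2 : 2 * g * R < c * t := by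
      have : 2 * g * R / c < t := lt_of_le_of_lt hN (by linarith)
      calc 2 * g * R = (2 * g * R / c) * c := by field_simp
        _ < t * c := by exact mul_lt_mul_of_pos_right this hc
        _ = c * t := mul_comm t c
    have hQm : c * t ^ 2 ≤ ∑ i, mr i * ∑ j, B i j * mr j := hQ mr
    have hdot : |∑ i, mr i * z i| ≤ g * (t * R) := by
      calc |∑ i, mr i * z i| ≤ ∑ i, |mr i * z i| := Finset.abs_sum_le_sum_abs _ _
        _ ≤ ∑ _i : Fin g, t * R := by
            refine Finset.sum_le_sum fun i _ => ?_
            rw [abs_mul]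
            have hzi : |z i| ≤ R :=
              le_trans (by simpa [Real.norm_eq_abs] using norm_le_pi_norm z i) (hR z hz)
            exact mul_le_mul (hco i) hzi (abs_nonneg _) ht0
        _ = g * (t * R) := by simp [Finset.sum_const, mul_comm]
    have hdot' : -(g * (t * R)) ≤ ∑ i, mr i * z i := neg_le_of_abs_le hdot
    show (0:ℝ) ≤ (1/2) * ∑ i, (m i : ℝ) * (∑ j, B i j * (m j : ℝ)) + ∑ i, (m i : ℝ) * z i
    have h3 : 2 * g * R * t ≤ c * t * t := by nlinarith
    nlinarith [hQm, hdot']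
  have hmemS : ∀ m : Fin g → ℤ, f m ∈ {x : ℝ | ∃ m : Fin g → ℤ,
      x = (1/2) * ∑ i, (m i : ℝ) * (∑ j, B i j * (m j : ℝ)) + ∑ i, (m i : ℝ) * z i} :=
    fun m => ⟨m, rfl⟩
  have hlow : ∀ x ∈ {x : ℝ | ∃ m : Fin g → ℤ,
      x = (1/2) * ∑ i, (m i : ℝ) * (∑ j, B i j * (m j : ℝ)) + ∑ i, (m i : ℝ) * z i},
      F.inf' hF f ≤ x := by
    rintro x ⟨m, rfl⟩
    by_cases hmF : m ∈ F
    · exact Finset.inf'_le f hmF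
    · calc F.inf' hF f ≤ f 0 := Finset.inf'_le f h0F
        _ = 0 := hf0
        _ ≤ f m := hout m hmF
  obtain ⟨m₀, hm₀F, hm₀⟩ := Finset.exists_mem_eq_inf' hF f
  rw [tropTheta]
  refine le_antisymm (csInf_le ⟨F.inf' hF f, hlow⟩ ?_) (le_csInf ⟨f 0, hmemS 0⟩ hlow)
  rw [hm₀]
  exact hmemS m₀
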